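/- Let G be a finite simple undirected graph. Then: (i) the number of orientations of G whose digraph contains a directed cycle is at least the number of edge subsets X ⊆ E such that G_X contains an (undirected) cycle; (ii) the number of acyclic orientations of G is at most the number of edge subsets X ⊆ E such that G_X is a forest. -/

import Mathlib

/-- The arc relation of the digraph obtained by orienting the edges of `X ⊆ E(G)`
according to `d` (relative to the reference orientation `ρ`): `d e = false` keeps
the reference direction `(ρ e).1 → (ρ e).2`, `d e = true` reverses it. -/
def arcsOn {V : Type*} (G : SimpleGraph V) (ρ : Sym2 V → V × V)
    (X : Set G.edgeSet) (d : G.edgeSet → Bool) : V → V → Prop :=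
  fun u v => ∃ e : G.edgeSet, e ∈ X ∧
    ((d e = false ∧ ρ e.val = (u, v)) ∨ (d e = true ∧ ρ e.val = (v, u)))

/-- The arc relation of the digraph `G⃗^d` obtained by orienting all edges of `G`
according to `d`. -/
def arcs {V : Type*} (G : SimpleGraph V) (ρ : Sym2 V → V × V)
    (d : G.edgeSet → Bool) : V → V → Prop :=
  arcsOn G ρ Set.univ d

/-- A digraph contains a directed cycle iff some vertex lies on a closed directed
walk of positive length. -/
def HasDiCycle {V : Type*} (R : V → V → Prop) : Prop :=
  ∃ v, Relation.TransGen R v v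

/-- The subgraph `G_X` of `G` on the full vertex set, with edge set `X ⊆ E(G)`. -/
def subgraphOf {V : Type*} (G : SimpleGraph V) (X : Set G.edgeSet) : SimpleGraph V :=
  SimpleGraph.fromEdgeSet (Subtype.val '' X)


section Aux
variable {ι W : Type*}

def MRel (ε : ι → W × W) (s : Set ι) (d : ι → Bool) : W → W → Prop :=
  fun a b => ∃ i, i ∈ s ∧ ((d i = false ∧ ε i = (a, b)) ∨ (d i = true ∧ ε i = (b, a)))

def Touches (ε : ι → W × W) (i : ι) (w : W) : Prop := (ε i).1 = w ∨ (ε i).2 = w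

def IsPendant (ε : ι → W × W) (Z : Set ι) (j : ι) (w : W) : Prop :=
  j ∈ Z ∧ (ε j).1 ≠ (ε j).2 ∧ Touches ε j w ∧ ∀ k ∈ Z, k ≠ j → ¬ Touches ε k w

def MForest (ε : ι → W × W) (X : Set ι) : Prop :=
  ∀ Z ⊆ X, Z.Nonempty → ∃ j w, IsPendant ε Z j w

lemma hasDiCycle_mono {R S : W → W → Prop} (h : ∀ a b, R a b → S a b) :
    HasDiCycle R → HasDiCycle S := fun ⟨v, hv⟩ => ⟨v, Relation.TransGen.mono h _ _ hv⟩

lemma mrel_mono {ε : ι → W × W} {s s' : Set ι} {d : ι → Bool} (h : s' ⊆ s) :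
    ∀ a b, MRel ε s' d a b → MRel ε s d a b := by
  rintro a b ⟨i, hi, hc⟩; exact ⟨i, h hi, hc⟩

lemma mrel_congr {ε : ι → W × W} {s : Set ι} {d d' : ι → Bool}
    (hd : ∀ i ∈ s, d i = d' i) : MRel ε s d = MRel ε s d' := by
  funext a b; apply propext
  constructor <;> rintro ⟨i, hi, hc⟩ <;> exact ⟨i, hi, by rw [hd i hi] at *; exact hc⟩

lemma merge_fiber [DecidableEq W] {u v x y : W} (huv : u ≠ v)
    (h : (if x = u then v else x) = (if y = u then v else y)) :
    x = y ∨ (x = u ∧ y = v) ∨ (x = v ∧ y = u) := by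
  by_cases hx : x = u <;> by_cases hy : y = u <;> simp [hx, hy] at h ⊢ <;> tauto

lemma merge_cycle [DecidableEq W] {R : W → W → Prop} {u v : W} (huv : u ≠ v)
    (h : HasDiCycle (fun a b => ∃ x y, R x y ∧
      (if x = u then v else x) = a ∧ (if y = u then v else y) = b)) :
    HasDiCycle R ∨ Relation.TransGen R u v ∨ Relation.TransGen R v u := by
  by_contra hcon
  push_neg at hcon
  obtain ⟨h1, h2, h3⟩ := hcon
  obtain ⟨a, ha⟩ := h
  have key : ∀ a b, Relation.TransGen (fun a b => ∃ x y, R x y ∧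
      (if x = u then v else x) = a ∧ (if y = u then v else y) = b) a b →
      ∃ x y, (if x = u then v else x) = a ∧ (if y = u then v else y) = b ∧
        (Relation.TransGen R x y ∨ (Relation.TransGen R x u ∧ Relation.TransGen R v y) ∨
         (Relation.TransGen R x v ∧ Relation.TransGen R u y)) := by
    intro a b hab
    induction hab with
    | single h =>
      obtain ⟨x, y, hxy, hx, hy⟩ := h
      exact ⟨x, y, hx, hy, Or.inl (Relation.TransGen.single hxy)⟩
    | tail _ hbc ih =>
      obtain ⟨x, y, hx, hy, hC⟩ := ih
      obtain ⟨x', y', hR, hx', hy'⟩ := hbc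
      have hfib := merge_fiber huv (hy.trans hx'.symm)
      rcases hfib with heq | ⟨hyu, hxv⟩ | ⟨hyv, hxu⟩
      · refine ⟨x, y', hx, hy', ?_⟩
        rw [heq] at hC
        rcases hC with t | ⟨t1, t2⟩ | ⟨t1, t2⟩
        · exact Or.inl (t.tail hR)
        · exact Or.inr (Or.inl ⟨t1, t2.tail hR⟩)
        · exact Or.inr (Or.inr ⟨t1, t2.tail hR⟩)
      · rw [hyu] at hC
        rcases hC with t | ⟨t1, t2⟩ | ⟨t1, t2⟩
        · exact ⟨x, y', hx, hy', Or.inr (Or.inl ⟨t, Relation.TransGen.single (hxv ▸ hR)⟩)⟩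
        · exact absurd t2 h3
        · exact absurd ⟨u, t2⟩ h1
      · rw [hyv] at hC
        rcases hC with t | ⟨t1, t2⟩ | ⟨t1, t2⟩
        · exact ⟨x, y', hx, hy', Or.inr (Or.inr ⟨t, Relation.TransGen.single (hxu ▸ hR)⟩)⟩
        · exact absurd ⟨v, t2⟩ h1
        · exact absurd t2 h2
  obtain ⟨x, y, hx, hy, hC⟩ := key a a ha
  have hfib := merge_fiber huv (hx.trans hy.symm)
  rcases hfib with heq | ⟨hxu, hyv⟩ | ⟨hxv, hyu⟩
  · rw [heq] at hC
    rcases hC with t | ⟨t1, t2⟩ | ⟨t1, t2⟩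
    · exact h1 ⟨y, t⟩
    · exact h3 (t2.trans t1)
    · exact h2 (t2.trans t1)
  · rw [hxu, hyv] at hC
    rcases hC with t | ⟨t1, t2⟩ | ⟨t1, t2⟩
    · exact h2 t
    · exact h1 ⟨u, t1⟩
    · exact h2 t1
  · rw [hxv, hyu] at hC
    rcases hC with t | ⟨t1, t2⟩ | ⟨t1, t2⟩
    · exact h3 t
    · exact h3 t1
    · exact h1 ⟨v, t1⟩

lemma mrel_merge [DecidableEq W] (ε : ι → W × W) (s : Set ι) (d : ι → Bool) (u v : W) :
    MRel (fun i => ((if (ε i).1 = u then v else (ε i).1),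
                    (if (ε i).2 = u then v else (ε i).2))) s d =
    fun a b => ∃ x y, MRel ε s d x y ∧
      (if x = u then v else x) = a ∧ (if y = u then v else y) = b := by
  funext a b; apply propext
  constructor
  · rintro ⟨i, hi, ⟨hd, hp⟩ | ⟨hd, hp⟩⟩
    · obtain ⟨hp1, hp2⟩ := Prod.mk.injEq .. ▸ hp
      exact ⟨(ε i).1, (ε i).2, ⟨i, hi, Or.inl ⟨hd, rfl⟩⟩, hp1, hp2⟩
    · obtain ⟨hp1, hp2⟩ := Prod.mk.injEq .. ▸ hp
      exact ⟨(ε i).2, (ε i).1, ⟨i, hi, Or.inr ⟨hd, rfl⟩⟩, hp2, hp1⟩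
  · rintro ⟨x, y, ⟨i, hi, ⟨hd, hp⟩ | ⟨hd, hp⟩⟩, hx, hy⟩
    · exact ⟨i, hi, Or.inl ⟨hd, by simp [hp, hx, hy]⟩⟩
    · exact ⟨i, hi, Or.inr ⟨hd, by simp [hp, hx, hy]⟩⟩

lemma mforest_insert [DecidableEq W] {ε : ι → W × W} {u v : W} (huv : u ≠ v) {i₀ : ι}
    (he : ε i₀ = (u, v)) {X : Set ι}
    (hX : MForest (fun i => ((if (ε i).1 = u then v else (ε i).1),
                             (if (ε i).2 = u then v else (ε i).2))) X) :
    MForest ε (insert i₀ X) := by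
  set m : W → W := fun x => if x = u then v else x with hm
  have hmu : m u = v := by simp [hm]
  have hmv : m v = v := by simp [hm, Ne.symm huv]
  have hm_ne_u : ∀ x, m x ≠ u := by
    intro x hx
    by_cases h : x = u
    · rw [hm] at hx; simp only [h, if_pos rfl] at hx; exact huv hx.symm
    · rw [hm] at hx; simp only [if_neg h] at hx; exact h hx
  have hmfix : ∀ x, x ≠ u → m x = x := by intro x h; simp [hm, h]
  intro Z hZ hZne
  by_cases hiZ : i₀ ∈ Z
  · by_cases hZ' : (Z \ {i₀}).Nonempty
    · have hsub : Z \ {i₀} ⊆ X := by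
        intro x hx
        rcases hZ hx.1 with h | h
        · exact absurd h hx.2
        · exact h
      obtain ⟨j, w, hjZ', hne', htj, hfree⟩ := hX (Z \ {i₀}) hsub hZ'
      have hne2 : m (ε j).1 ≠ m (ε j).2 := hne'
      have htj2 : m (ε j).1 = w ∨ m (ε j).2 = w := htj
      clear hne' htj
      by_cases hwv : w = v
      · -- pendant is i₀ with the {u,v}-endpoint not touched by j
        have hend : ∃ p q, ((ε j).1 = p ∧ (ε j).2 = q ∨ (ε j).1 = q ∧ (ε j).2 = p) ∧
            m p = v ∧ m q ≠ v := by
          rcases htj2 with h | h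
          · exact ⟨(ε j).1, (ε j).2, Or.inl ⟨rfl, rfl⟩, hwv ▸ h,
              fun hc => hne2 ((h.trans hwv).trans hc.symm)⟩
          · exact ⟨(ε j).2, (ε j).1, Or.inr ⟨rfl, rfl⟩, hwv ▸ h,
              fun hc => hne2 (hc.trans (hwv ▸ h).symm)⟩
        obtain ⟨p, q, hpq, hpv, hqv⟩ := hend
        have hpuv : p = u ∨ p = v := by
          by_cases hp : p = u
          · exact Or.inl hp
          · right; rw [hmfix p hp] at hpv; exact hpv
        have hq_not : q ≠ u ∧ q ≠ v := by
          constructor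
          · intro hc; rw [hc, hmu] at hqv; exact hqv rfl
          · intro hc; rw [hc, hmv] at hqv; exact hqv rfl
        obtain ⟨c, hc_uv, hcp⟩ : ∃ c, (c = u ∨ c = v) ∧ c ≠ p := by
          rcases hpuv with h | h
          · exact ⟨v, Or.inr rfl, fun hc => huv (hc.trans h).symm⟩
          · exact ⟨u, Or.inl rfl, fun hc => huv (hc.trans h)⟩
        have hmc : m c = v := by rcases hc_uv with h | h
                                 · rw [h, hmu]
                                 · rw [h, hmv]
        refine ⟨i₀, c, hiZ, (by rw [he]; exact huv), ?_, ?_⟩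
        · rcases hc_uv with h | h
          · exact Or.inl (by rw [he, h])
          · exact Or.inr (by rw [he, h])
        · intro k hk hki₀ htk
          by_cases hkj : k = j
          · have hcq : c ≠ q := by
              intro hcq
              rcases hc_uv with h | h
              · exact hq_not.1 (by rw [← hcq, h])
              · exact hq_not.2 (by rw [← hcq, h])
            rw [hkj] at htk
            rcases htk with ht | ht <;> rcases hpq with ⟨h1, h2⟩ | ⟨h1, h2⟩
            · exact hcp (ht.symm.trans h1)
            · exact hcq (ht.symm.trans h1)
            · exact hcq (ht.symm.trans h2)
            · exact hcp (ht.symm.trans h2)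
          · refine hfree k ⟨hk, hki₀⟩ hkj ?_
            rcases htk with ht | ht
            · left; show m (ε k).1 = w; rw [ht, hmc, hwv]
            · right; show m (ε k).2 = w; rw [ht, hmc, hwv]
      · -- w ∉ {u, v}
        have hwu : w ≠ u := by
          rintro rfl
          rcases htj2 with h | h
          · exact hm_ne_u _ h
          · exact hm_ne_u _ h
        have hmw : m w = w := hmfix w hwu
        have htjw : Touches ε j w := by
          rcases htj2 with h | h
          · left
            by_cases h1 : (ε j).1 = u
            · exact absurd (h.symm.trans (by rw [hm]; simp [h1])) hwv
            · exact (hmfix _ h1).symm.trans h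
          · right
            by_cases h1 : (ε j).2 = u
            · exact absurd (h.symm.trans (by rw [hm]; simp [h1])) hwv
            · exact (hmfix _ h1).symm.trans h
        refine ⟨j, w, (hjZ'.1 : j ∈ Z), ?_, htjw, ?_⟩
        · intro hc; exact hne2 (congrArg m hc)
        · intro k hk hkj htk
          by_cases hki₀ : k = i₀
          · rw [hki₀] at htk
            rcases htk with h | h
            · rw [he] at h; exact hwu h.symm
            · rw [he] at h; exact hwv h.symm
          · refine hfree k ⟨hk, hki₀⟩ hkj ?_
            rcases htk with h | h
            · left; show m (ε k).1 = w; rw [h, hmw]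
            · right; show m (ε k).2 = w; rw [h, hmw]
    · have hZeq : Z = {i₀} := by
        apply Set.eq_singleton_iff_nonempty_unique_mem.mpr
        refine ⟨hZne, ?_⟩
        intro x hx
        by_contra hne
        exact hZ' ⟨x, hx, hne⟩
      refine ⟨i₀, u, hiZ, (by rw [he]; exact huv), Or.inl (by rw [he]), ?_⟩
      intro k hk hki₀ _
      rw [hZeq] at hk
      exact hki₀ hk
  · have hsub : Z ⊆ X := by
      intro x hx
      rcases hZ hx with h | h
      · exact absurd (h ▸ hx) hiZ
      · exact h
    obtain ⟨j, w, hjZ, hne', htj, hfree⟩ := hX Z hsub hZne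
    have hne2 : m (ε j).1 ≠ m (ε j).2 := hne'
    have htj2 : m (ε j).1 = w ∨ m (ε j).2 = w := htj
    have hne : (ε j).1 ≠ (ε j).2 := fun hc => hne2 (congrArg m hc)
    rcases htj2 with h | h
    · refine ⟨j, (ε j).1, hjZ, hne, Or.inl rfl, ?_⟩
      intro k hk hkj htk
      refine hfree k hk hkj ?_
      rcases htk with h' | h'
      · left; show m (ε k).1 = w; rw [h', ← h]
      · right; show m (ε k).2 = w; rw [h', ← h]
    · refine ⟨j, (ε j).2, hjZ, hne, Or.inr rfl, ?_⟩
      intro k hk hkj htk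
      refine hfree k hk hkj ?_
      rcases htk with h' | h'
      · left; show m (ε k).1 = w; rw [h', ← h]
      · right; show m (ε k).2 = w; rw [h', ← h]

end Aux


section Core
variable {ι W : Type*}

example [Finite ι] : Finite (Set ι) := inferInstance
example [Finite ι] : Finite (ι → Bool) := inferInstance

lemma core [Finite ι] [DecidableEq ι] [DecidableEq W] (s : Finset ι) :
    ∀ ε : ι → W × W,
      {d : ι → Bool | (∀ i, i ∉ s → d i = false) ∧ ¬ HasDiCycle (MRel ε ↑s d)}.ncard ≤
      {X : Set ι | X ⊆ ↑s ∧ MForest ε X}.ncard := by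
  induction s using Finset.strongInduction with
  | _ s ih =>
  intro ε
  rcases s.eq_empty_or_nonempty with rfl | ⟨i₀, hi₀⟩
  · have hL : {d : ι → Bool | (∀ i, i ∉ (∅ : Finset ι) → d i = false) ∧
        ¬ HasDiCycle (MRel ε ↑(∅ : Finset ι) d)} = {fun _ => false} := by
      ext d
      simp only [Set.mem_setOf_eq, Set.mem_singleton_iff]
      constructor
      · rintro ⟨h1, _⟩; funext i; exact h1 i (by simp)
      · rintro rfl
        refine ⟨fun i _ => rfl, ?_⟩
        have : ∀ a b : W, ¬ Relation.TransGen (MRel ε ↑(∅ : Finset ι) (fun _ => false)) a b := by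
          intro a b h
          induction h with
          | single h => obtain ⟨i, hi, _⟩ := h; simp at hi
          | tail _ h _ => obtain ⟨i, hi, _⟩ := h; simp at hi
        rintro ⟨x, hx⟩
        exact this x x hx
    have hFmem : ({∅} : Set (Set ι)) ⊆ {X : Set ι | X ⊆ (↑(∅ : Finset ι) : Set ι) ∧ MForest ε X} := by
      rintro X rfl
      refine ⟨by simp, ?_⟩
      intro Z hZ hZne
      exact absurd (Set.subset_empty_iff.mp hZ) hZne.ne_empty
    calc {d : ι → Bool | (∀ i, i ∉ (∅ : Finset ι) → d i = false) ∧
          ¬ HasDiCycle (MRel ε ↑(∅ : Finset ι) d)}.ncard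
        = 1 := by rw [hL, Set.ncard_singleton]
      _ = ({∅} : Set (Set ι)).ncard := (Set.ncard_singleton _).symm
      _ ≤ _ := Set.ncard_le_ncard hFmem (Set.toFinite _)
  · set u := (ε i₀).1 with hu
    set v := (ε i₀).2 with hv
    have he : ε i₀ = (u, v) := rfl
    set s' : Finset ι := s.erase i₀ with hs'
    have hss' : (↑s' : Set ι) ⊆ ↑s := by
      intro x hx; exact Finset.mem_coe.mpr (Finset.mem_of_mem_erase (Finset.mem_coe.mp hx))
    have hssub : s' ⊂ s := Finset.erase_ssubset hi₀
    have hi₀s' : i₀ ∉ s' := Finset.notMem_erase i₀ s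
    have hmem_s : i₀ ∈ (↑s : Set ι) := Finset.mem_coe.mpr hi₀
    by_cases huv : u = v
    · have hempty : {d : ι → Bool | (∀ i, i ∉ s → d i = false) ∧
          ¬ HasDiCycle (MRel ε ↑s d)} = ∅ := by
        ext d
        simp only [Set.mem_setOf_eq, Set.mem_empty_iff_false, iff_false, not_and]
        intro _ hac
        apply hac
        refine ⟨u, Relation.TransGen.single ?_⟩
        cases hd : d i₀
        · exact ⟨i₀, hmem_s, Or.inl ⟨hd, by rw [he, ← huv]⟩⟩
        · exact ⟨i₀, hmem_s, Or.inr ⟨hd, by rw [he, ← huv]⟩⟩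
      rw [hempty]
      simp
    · set ε' : ι → W × W := fun i => ((if (ε i).1 = u then v else (ε i).1),
                                      (if (ε i).2 = u then v else (ε i).2)) with hε'
      set L := {d : ι → Bool | (∀ i, i ∉ s → d i = false) ∧ ¬ HasDiCycle (MRel ε ↑s d)} with hLdef
      set A := {d : ι → Bool | (∀ i, i ∉ s' → d i = false) ∧ ¬ HasDiCycle (MRel ε ↑s' d) ∧
        ¬ Relation.TransGen (MRel ε ↑s' d) v u} with hAdef
      set B := {d : ι → Bool | (∀ i, i ∉ s' → d i = false) ∧ ¬ HasDiCycle (MRel ε ↑s' d) ∧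
        ¬ Relation.TransGen (MRel ε ↑s' d) u v} with hBdef
      set L0 := L ∩ {d | d i₀ = false} with hL0def
      set L1 := L ∩ {d | d i₀ = true} with hL1def
      have hLsplit : L = L0 ∪ L1 := by
        ext d
        by_cases h : d i₀ = false
        · simp [hL0def, hL1def, h]
        · simp only [Bool.not_eq_false] at h
          simp [hL0def, hL1def, h]
      have hLcard : L.ncard = L0.ncard + L1.ncard := by
        rw [hLsplit]
        apply Set.ncard_union_eq
        · rw [Set.disjoint_left]
          rintro d ⟨_, h0⟩ ⟨_, h1⟩
          simp only [Set.mem_setOf_eq] at h0 h1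
          rw [h0] at h1; exact Bool.false_ne_true h1
        · exact Set.toFinite _
        · exact Set.toFinite _
      have hL0A : L0 ⊆ A := by
        rintro d ⟨⟨hsupp, hac⟩, hd0⟩
        simp only [Set.mem_setOf_eq] at hd0
        have hsupp' : ∀ i, i ∉ s' → d i = false := by
          intro i hi
          by_cases hii : i = i₀
          · rw [hii]; exact hd0
          · exact hsupp i (fun hmem => hi (Finset.mem_erase.mpr ⟨hii, hmem⟩))
        refine ⟨hsupp', ?_, ?_⟩
        · intro hcyc; exact hac (hasDiCycle_mono (mrel_mono hss') hcyc)
        · intro htg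
          apply hac
          refine ⟨u, Relation.TransGen.head ⟨i₀, hmem_s, Or.inl ⟨hd0, he⟩⟩ ?_⟩
          exact Relation.TransGen.mono (mrel_mono hss') _ _ htg
      have hL1B : (fun d => Function.update d i₀ false) '' L1 ⊆ B := by
        rintro _ ⟨d, ⟨⟨hsupp, hac⟩, hd1⟩, rfl⟩
        simp only [Set.mem_setOf_eq] at hd1
        have hcongr : MRel ε ↑s' (Function.update d i₀ false) = MRel ε ↑s' d := by
          apply mrel_congr
          intro i hi
          exact Function.update_of_ne (Finset.ne_of_mem_erase (Finset.mem_coe.mp hi)) _ _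
        have hsupp' : ∀ i, i ∉ s' → Function.update d i₀ false i = false := by
          intro i hi
          by_cases hii : i = i₀
          · rw [hii]; simp
          · rw [Function.update_of_ne hii]
            exact hsupp i (fun hmem => hi (Finset.mem_erase.mpr ⟨hii, hmem⟩))
        refine ⟨hsupp', ?_, ?_⟩
        · rw [hcongr]
          intro hcyc; exact hac (hasDiCycle_mono (mrel_mono hss') hcyc)
        · rw [hcongr]
          intro htg
          apply hac
          refine ⟨v, Relation.TransGen.head ⟨i₀, hmem_s, Or.inr ⟨hd1, he⟩⟩ ?_⟩
          exact Relation.TransGen.mono (mrel_mono hss') _ _ htg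
      have hL1card : L1.ncard = ((fun d => Function.update d i₀ false) '' L1).ncard := by
        rw [Set.ncard_image_of_injOn]
        rintro d₁ ⟨_, h1⟩ d₂ ⟨_, h2⟩ heq
        simp only [Set.mem_setOf_eq] at h1 h2
        funext i
        by_cases hii : i = i₀
        · rw [hii, h1, h2]
        · have := congrFun heq i
          simp only [Function.update_of_ne hii] at this
          exact this
      have hABcard : A.ncard + B.ncard = (A ∪ B).ncard + (A ∩ B).ncard :=
        (Set.ncard_union_add_ncard_inter A B (Set.toFinite _) (Set.toFinite _)).symm
      have hAB1 : A ∪ B ⊆ {d : ι → Bool | (∀ i, i ∉ s' → d i = false) ∧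
          ¬ HasDiCycle (MRel ε ↑s' d)} := by
        rintro d (⟨h1, h2, _⟩ | ⟨h1, h2, _⟩) <;> exact ⟨h1, h2⟩
      have hAB2 : A ∩ B ⊆ {d : ι → Bool | (∀ i, i ∉ s' → d i = false) ∧
          ¬ HasDiCycle (MRel ε' ↑s' d)} := by
        rintro d ⟨⟨h1, hac, htg1⟩, ⟨_, _, htg2⟩⟩
        refine ⟨h1, ?_⟩
        intro hcyc
        rw [hε', mrel_merge] at hcyc
        rcases merge_cycle huv hcyc with hc | hc | hc
        · exact hac hc
        · exact htg2 hc
        · exact htg1 hc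
      -- forest side
      set P := {X : Set ι | X ⊆ ↑s' ∧ MForest ε X} with hPdef
      set Q' := {X : Set ι | X ⊆ ↑s' ∧ MForest ε' X} with hQ'def
      set Q := (fun X => insert i₀ X) '' Q' with hQdef
      have hQcard : Q'.ncard = Q.ncard := by
        rw [hQdef, Set.ncard_image_of_injOn]
        rintro X₁ ⟨hX₁, _⟩ X₂ ⟨hX₂, _⟩ heq
        have h1 : i₀ ∉ X₁ := fun h => hi₀s' (Finset.mem_coe.mp (hX₁ h))
        have h2 : i₀ ∉ X₂ := fun h => hi₀s' (Finset.mem_coe.mp (hX₂ h))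
        simp only at heq
        rw [← Set.insert_diff_self_of_notMem h1, ← Set.insert_diff_self_of_notMem h2, heq]
      have hPQ : P ∪ Q ⊆ {X : Set ι | X ⊆ ↑s ∧ MForest ε X} := by
        rintro X (⟨hX1, hX2⟩ | ⟨Y, ⟨hY1, hY2⟩, rfl⟩)
        · exact ⟨hX1.trans hss', hX2⟩
        · refine ⟨?_, ?_⟩
          · intro x hx
            rcases hx with rfl | hx
            · exact hmem_s
            · exact hss' (hY1 hx)
          · rw [hε'] at hY2
            exact mforest_insert huv he hY2
      have hPQdisj : Disjoint P Q := by
        rw [Set.disjoint_left]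
        rintro X ⟨hX1, _⟩ ⟨Y, _, rfl⟩
        exact hi₀s' (Finset.mem_coe.mp (hX1 (Set.mem_insert i₀ Y)))
      have hPQcard : P.ncard + Q.ncard = (P ∪ Q).ncard :=
        (Set.ncard_union_eq hPQdisj (Set.toFinite _) (Set.toFinite _)).symm
      -- assemble
      have ih1 := ih s' hssub ε
      have ih2 := ih s' hssub ε'
      calc L.ncard = L0.ncard + L1.ncard := hLcard
        _ = L0.ncard + ((fun d => Function.update d i₀ false) '' L1).ncard := by rw [← hL1card]
        _ ≤ A.ncard + B.ncard :=
            Nat.add_le_add (Set.ncard_le_ncard hL0A (Set.toFinite _))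
              (Set.ncard_le_ncard hL1B (Set.toFinite _))
        _ = (A ∪ B).ncard + (A ∩ B).ncard := hABcard
        _ ≤ {d : ι → Bool | (∀ i, i ∉ s' → d i = false) ∧
              ¬ HasDiCycle (MRel ε ↑s' d)}.ncard +
            {d : ι → Bool | (∀ i, i ∉ s' → d i = false) ∧
              ¬ HasDiCycle (MRel ε' ↑s' d)}.ncard :=
            Nat.add_le_add (Set.ncard_le_ncard hAB1 (Set.toFinite _))
              (Set.ncard_le_ncard hAB2 (Set.toFinite _))
        _ ≤ P.ncard + Q'.ncard := Nat.add_le_add ih1 ih2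
        _ = P.ncard + Q.ncard := by rw [hQcard]
        _ = (P ∪ Q).ncard := hPQcard
        _ ≤ _ := Set.ncard_le_ncard hPQ (Set.toFinite _)

end Core


section Transfer

lemma list_head_ne_getLast {α : Type*} {l : List α} (hnd : l.Nodup) (h2 : 2 ≤ l.length)
    (h1 : l ≠ []) : l.head h1 ≠ l.getLast h1 := by
  match l, hnd, h2 with
  | a :: b :: t, hnd, _ =>
    intro hc
    simp only [List.head_cons] at hc
    have hmem : (a :: b :: t).getLast (by simp) ∈ b :: t := by
      rw [List.getLast_cons (by simp : (b :: t) ≠ [])]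
      exact List.getLast_mem _
    rw [← hc] at hmem
    exact (List.nodup_cons.mp hnd).1 hmem

lemma walk_head_edge {V : Type*} {H : SimpleGraph V} {a b : V} (p : H.Walk a b)
    (hp : p.edges ≠ []) : a ∈ p.edges.head hp := by
  cases p with
  | nil => simp at hp
  | cons h q => simp [SimpleGraph.Walk.edges_cons]

lemma walk_getLast_edge {V : Type*} {H : SimpleGraph V} {a b : V} (p : H.Walk a b)
    (hp : p.edges ≠ []) : b ∈ p.edges.getLast hp := by
  have hp' : p.reverse.edges ≠ [] := by
    rw [SimpleGraph.Walk.edges_reverse, ne_eq, List.reverse_eq_nil_iff]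
    exact hp
  have h := walk_head_edge p.reverse hp'
  simp only [SimpleGraph.Walk.edges_reverse, List.head_reverse] at h
  exact h

lemma mforest_isAcyclic {V : Type*} (G : SimpleGraph V) (ρ : Sym2 V → V × V)
    (hρ : ∀ e ∈ G.edgeSet, Sym2.mk (ρ e).1 (ρ e).2 = e) (X : Set G.edgeSet)
    (h : MForest (fun e => ρ e.val) X) : (subgraphOf G X).IsAcyclic := by
  classical
  intro w0 c hc
  have hedge : ∀ e ∈ c.edges, ∃ i : G.edgeSet, i ∈ X ∧ (i : Sym2 V) = e := by
    intro e he
    have h1 : e ∈ (subgraphOf G X).edgeSet := c.edges_subset_edgeSet he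
    rw [subgraphOf, SimpleGraph.edgeSet_fromEdgeSet] at h1
    obtain ⟨i, hiX, hie⟩ := h1.1
    exact ⟨i, hiX, hie⟩
  set Z : Set G.edgeSet := {i | i ∈ X ∧ (i : Sym2 V) ∈ c.edges} with hZdef
  have hZX : Z ⊆ X := fun i hi => hi.1
  have h3 := hc.three_le_length
  have hne : c.edges ≠ [] := by
    intro h0
    have := c.length_edges
    rw [h0] at this
    simp at this
    omega
  have hZne : Z.Nonempty := by
    obtain ⟨i, hiX, hie⟩ := hedge _ (List.head_mem hne)
    exact ⟨i, hiX, hie ▸ List.head_mem hne⟩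
  obtain ⟨j, w, hjZ, hnd, htj, hfree⟩ := h Z hZX hZne
  have hjE : Sym2.mk (ρ (j : Sym2 V)).1 (ρ (j : Sym2 V)).2 = (j : Sym2 V) := hρ _ j.2
  have htj' : (ρ (j : Sym2 V)).1 = w ∨ (ρ (j : Sym2 V)).2 = w := htj
  have hwj : w ∈ (j : Sym2 V) := by
    rw [← hjE]
    rcases htj' with h' | h'
    · exact Sym2.mem_iff.mpr (Or.inl h'.symm)
    · exact Sym2.mem_iff.mpr (Or.inr h'.symm)
  have hjc : (j : Sym2 V) ∈ c.edges := hjZ.2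
  obtain ⟨y, hjy⟩ := Sym2.mem_iff_exists.mp hwj
  have hws : w ∈ c.support := SimpleGraph.Walk.fst_mem_support_of_mem_edges c (hjy ▸ hjc)
  have hc' : (c.rotate w hws).IsCycle := hc.rotate hws
  have hrot := c.rotate_edges w hws
  have hmemiff : ∀ e, e ∈ (c.rotate w hws).edges ↔ e ∈ c.edges := fun e => hrot.mem_iff
  have h3' := hc'.three_le_length
  have hne' : (c.rotate w hws).edges ≠ [] := by
    intro h0
    have := (c.rotate w hws).length_edges
    rw [h0] at this
    simp at this
    omega
  have he₁ : w ∈ (c.rotate w hws).edges.head hne' := walk_head_edge _ hne'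
  have he₂ : w ∈ (c.rotate w hws).edges.getLast hne' := walk_getLast_edge _ hne'
  have hnodup : (c.rotate w hws).edges.Nodup := hc'.isCircuit.isTrail.edges_nodup
  have hlen2 : 2 ≤ (c.rotate w hws).edges.length := by
    rw [(c.rotate w hws).length_edges]
    omega
  have hne12 := list_head_ne_getLast hnodup hlen2 hne'
  obtain ⟨j₁, hj₁X, hj₁e⟩ := hedge _ ((hmemiff _).mp (List.head_mem hne'))
  obtain ⟨j₂, hj₂X, hj₂e⟩ := hedge _ ((hmemiff _).mp (List.getLast_mem hne'))
  have hj₁Z : j₁ ∈ Z := ⟨hj₁X, hj₁e ▸ (hmemiff _).mp (List.head_mem hne')⟩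
  have hj₂Z : j₂ ∈ Z := ⟨hj₂X, hj₂e ▸ (hmemiff _).mp (List.getLast_mem hne')⟩
  have hj₁₂ : j₁ ≠ j₂ := by
    intro hcq
    exact hne12 (by rw [← hj₁e, hcq, hj₂e])
  have htouch : ∀ (j' : G.edgeSet), j' ∈ Z → w ∈ (j' : Sym2 V) →
      Touches (fun e : G.edgeSet => ρ e.val) j' w := by
    intro j' _ hw'
    have hj'E : Sym2.mk (ρ (j' : Sym2 V)).1 (ρ (j' : Sym2 V)).2 = (j' : Sym2 V) := hρ _ j'.2
    rw [← hj'E] at hw'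
    rcases Sym2.mem_iff.mp hw' with h' | h'
    · exact Or.inl h'.symm
    · exact Or.inr h'.symm
  have hw₁ : w ∈ (j₁ : Sym2 V) := hj₁e ▸ he₁
  have hw₂ : w ∈ (j₂ : Sym2 V) := hj₂e ▸ he₂
  by_cases hj1 : j₁ = j
  · have hj2 : j₂ ≠ j := fun hcq => hj₁₂ (hj1.trans hcq.symm)
    exact hfree j₂ hj₂Z hj2 (htouch j₂ hj₂Z hw₂)
  · exact hfree j₁ hj₁Z hj1 (htouch j₁ hj₁Z hw₁)

end Transfer


/-- (i) the number of orientations of `G` containing a directed cycle is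
at least the number of edge subsets `X` such that `G_X` contains a cycle; (ii) the number
of acyclic orientations is at most the number of edge subsets `X` such that `G_X` is a
forest. -/
theorem cyclic_orientations_vs_subgraphs {V : Type*} [Fintype V] (G : SimpleGraph V)
    (ρ : Sym2 V → V × V) (hρ : ∀ e ∈ G.edgeSet, Sym2.mk (ρ e).1 (ρ e).2 = e) :
    {X : Set G.edgeSet | ¬ (subgraphOf G X).IsAcyclic}.ncard ≤
      {d : G.edgeSet → Bool | HasDiCycle (arcs G ρ d)}.ncard ∧
    {d : G.edgeSet → Bool | ¬ HasDiCycle (arcs G ρ d)}.ncard ≤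
      {X : Set G.edgeSet | (subgraphOf G X).IsAcyclic}.ncard := by
  classical
  haveI : Finite ↥G.edgeSet := by
    haveI : Finite (Sym2 V) := Finite.of_fintype _
    exact Subtype.finite
  haveI : Fintype ↥G.edgeSet := Fintype.ofFinite _
  set ε : G.edgeSet → V × V := fun e => ρ e.val with hεdef
  have harcs : ∀ d : G.edgeSet → Bool,
      arcs G ρ d = MRel ε ↑(Finset.univ : Finset ↥G.edgeSet) d := by
    intro d
    funext a b
    apply propext
    constructor
    · rintro ⟨e, -, hcase⟩
      exact ⟨e, by simp, hcase⟩
    · rintro ⟨e, -, hcase⟩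
      exact ⟨e, trivial, hcase⟩
  have hii : {d : G.edgeSet → Bool | ¬ HasDiCycle (arcs G ρ d)}.ncard ≤
      {X : Set G.edgeSet | (subgraphOf G X).IsAcyclic}.ncard := by
    have h1 : {d : G.edgeSet → Bool | ¬ HasDiCycle (arcs G ρ d)} =
        {d : G.edgeSet → Bool | (∀ i, i ∉ (Finset.univ : Finset ↥G.edgeSet) → d i = false) ∧
          ¬ HasDiCycle (MRel ε ↑(Finset.univ : Finset ↥G.edgeSet) d)} := by
      ext d
      simp [harcs d]
    rw [h1]
    refine (core Finset.univ ε).trans (Set.ncard_le_ncard ?_ (Set.toFinite _))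
    rintro X ⟨-, hX⟩
    exact mforest_isAcyclic G ρ hρ X hX
  refine ⟨?_, hii⟩
  have hXc : {X : Set G.edgeSet | ¬ (subgraphOf G X).IsAcyclic} =
      {X : Set G.edgeSet | (subgraphOf G X).IsAcyclic}ᶜ := rfl
  have hDc : {d : G.edgeSet → Bool | HasDiCycle (arcs G ρ d)} =
      {d : G.edgeSet → Bool | ¬ HasDiCycle (arcs G ρ d)}ᶜ := by
    ext d; simp
  have t1 := Set.ncard_add_ncard_compl
    {X : Set G.edgeSet | (subgraphOf G X).IsAcyclic} (Set.toFinite _) (Set.toFinite _)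
  have t2 := Set.ncard_add_ncard_compl
    {d : G.edgeSet → Bool | ¬ HasDiCycle (arcs G ρ d)} (Set.toFinite _) (Set.toFinite _)
  have tt : Nat.card (Set G.edgeSet) = Nat.card (G.edgeSet → Bool) :=
    Nat.card_congr (Equiv.arrowCongr (Equiv.refl ↥G.edgeSet) Equiv.propEquivBool :
      (↥G.edgeSet → Prop) ≃ (↥G.edgeSet → Bool))
  rw [hXc, hDc]
  omega
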